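/- arXiv:0807.5138 — 2 statements merged into one kernel-verified Lean document; each statement's English description precedes it below -/
import Mathlib

section
/- Let G be a group, let H be a finitely generated subgroup of G, and let t ∈ G be such that t⁻¹Ht is a proper subgroup of H. Then the family of subgroups (tⁿHt⁻ⁿ) for n ≥ 0 is strictly increasing, its union is a subgroup of G, and this union is not finitely generated. -/
/-- **Statement 4.** If `H` is a finitely generated subgroup of `G` and `t⁻¹ H t` is a
proper subgroup of `H`, then the family `(tⁿ H t⁻ⁿ)_{n ≥ 0}` is strictly increasing, its
union is a subgroup of `G`, and this union is not finitely generated. -/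
theorem union_of_strictly_increasing_conjugates_not_fg {G : Type*} [Group G]
    (H : Subgroup G) (hfg : H.FG) (t : G)
    (hlt : H.map (MulAut.conj t⁻¹).toMonoidHom < H) :
    StrictMono (fun n : ℕ => H.map (MulAut.conj (t ^ n)).toMonoidHom) ∧
    ∃ U : Subgroup G,
      (U : Set G) = (⋃ n : ℕ, (H.map (MulAut.conj (t ^ n)).toMonoidHom : Set G)) ∧
      ¬ U.FG := by
  set K : ℕ → Subgroup G := fun n => H.map (MulAut.conj (t ^ n)).toMonoidHom with hK
  have hmaplt : ∀ (f : G →* G), Function.Injective f → ∀ (A B : Subgroup G),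
      A < B → A.map f < B.map f := by
    intro f hf A B h
    exact lt_of_le_of_ne ((Subgroup.map_le_map_iff_of_injective hf).mpr h.le)
      fun e => h.ne (Subgroup.map_injective hf e)
  -- H < conj t H
  have hstep : H < H.map (MulAut.conj t).toMonoidHom := by
    have := hmaplt (MulAut.conj t).toMonoidHom ((MulAut.conj t).injective) _ _ hlt
    rwa [Subgroup.map_map, show ((MulAut.conj t).toMonoidHom.comp (MulAut.conj t⁻¹).toMonoidHom)
      = MonoidHom.id G by ext x; simp; group, Subgroup.map_id] at this
  have hsucc : ∀ n, K n < K (n + 1) := by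
    intro n
    have := hmaplt (MulAut.conj (t ^ n)).toMonoidHom ((MulAut.conj (t ^ n)).injective) _ _ hstep
    rw [Subgroup.map_map] at this
    have heq : ((MulAut.conj (t ^ n)).toMonoidHom.comp (MulAut.conj t).toMonoidHom)
        = (MulAut.conj (t ^ (n + 1))).toMonoidHom := by
      ext x; simp [pow_succ]
    rw [heq] at this
    exact this
  have hmono : StrictMono K := strictMono_nat_of_lt_succ hsucc
  refine ⟨hmono, ⨆ n, K n, ?_, ?_⟩
  · exact Subgroup.coe_iSup_of_directed (hmono.monotone.directed_le)
  · rintro ⟨S, hS⟩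
    have hmem : ∀ p : {x // x ∈ S}, ∃ n, p.1 ∈ K n := by
      intro ⟨s, hs⟩
      have : s ∈ ⨆ n, K n := hS ▸ Subgroup.subset_closure hs
      exact (Subgroup.mem_iSup_of_directed hmono.monotone.directed_le).mp this
    choose f hf using hmem
    obtain ⟨N, hN⟩ : ∃ N, ∀ p, f p ≤ N :=
      ⟨S.attach.sup f, fun p => Finset.le_sup (Finset.mem_attach S p)⟩
    have hle : (⨆ n, K n) ≤ K N := by
      rw [← hS, Subgroup.closure_le]
      intro s hs
      exact hmono.monotone (hN ⟨s, hs⟩) (hf ⟨s, hs⟩)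
    exact absurd (le_trans (le_iSup K (N + 1)) hle) (hsucc N).not_ge
end

section
/- Let G be a group generated by a subgroup H together with an element t such that t⁻¹ht ∈ H for every h ∈ H, and let χ : G → ℤ be a group homomorphism with χ(h) = 0 for all h ∈ H and χ(t) = 1. Then every element of G can be written in the form tᵃ h t⁻ᵇ with integers a, b ≥ 0 and h ∈ H, and the kernel of χ equals the union over n ≥ 0 of the subgroups tⁿHt⁻ⁿ. -/
/-- **Statement 5.** If `G` is generated by a subgroup `H` together with `t`, where
`t⁻¹ H t ⊆ H`, and `χ : G → ℤ` is a homomorphism with `χ(H) = 0` and `χ(t) = 1`, then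
every element of `G` has the form `tᵃ h t⁻ᵇ` with `a, b ≥ 0` and `h ∈ H`, and the kernel
of `χ` is the union of the subgroups `tⁿ H t⁻ⁿ` for `n ≥ 0`. -/
theorem ascending_hnn_normal_form_and_kernel {G : Type*} [Group G] (H : Subgroup G) (t : G)
    (hgen : Subgroup.closure ((H : Set G) ∪ {t}) = ⊤)
    (hconj : ∀ h ∈ H, t⁻¹ * h * t ∈ H)
    (χ : G → ℤ) (hhom : ∀ a b : G, χ (a * b) = χ a + χ b)
    (hH : ∀ h ∈ H, χ h = 0) (ht : χ t = 1) :
    (∀ g : G, ∃ (a b : ℕ) (h : G), h ∈ H ∧ g = t ^ a * h * (t ^ b)⁻¹) ∧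
    (∀ g : G, χ g = 0 ↔ ∃ n : ℕ, g ∈ H.map (MulAut.conj (t ^ n)).toMonoidHom) := by
  -- conjugation by negative powers of t keeps H
  have key : ∀ (n : ℕ) (h : G), h ∈ H → (t ^ n)⁻¹ * h * t ^ n ∈ H := by
    intro n
    induction n with
    | zero => intro h hh; simpa using hh
    | succ n ih =>
      intro h hh
      have : (t ^ (n+1))⁻¹ * h * t ^ (n+1) = (t ^ n)⁻¹ * (t⁻¹ * h * t) * t ^ n := by
        rw [pow_succ]; group
      rw [this]
      exact ih _ (hconj h hh)
  have normal : ∀ g : G, ∃ (a b : ℕ) (h : G), h ∈ H ∧ g = t ^ a * h * (t ^ b)⁻¹ := by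
    intro g
    have hg : g ∈ Subgroup.closure ((H : Set G) ∪ {t}) := by rw [hgen]; trivial
    induction hg using Subgroup.closure_induction with
    | mem x hx =>
      rcases hx with hx | hx
      · exact ⟨0, 0, x, hx, by simp⟩
      · refine ⟨1, 0, 1, H.one_mem, ?_⟩
        simp_all
    | one => exact ⟨0, 0, 1, H.one_mem, by simp⟩
    | mul x y _ _ hx hy =>
      obtain ⟨a, b, h, hh, rfl⟩ := hx
      obtain ⟨c, d, k, hk, rfl⟩ := hy
      rcases le_or_gt b c with hbc | hbc
      · refine ⟨a + (c - b), d, ((t ^ (c - b))⁻¹ * h * t ^ (c - b)) * k,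
          H.mul_mem (key _ _ hh) hk, ?_⟩
        have hc : t ^ c = t ^ b * t ^ (c - b) := by
          rw [← pow_add]; congr 1; omega
        rw [hc, pow_add]; group
      · refine ⟨a, d + (b - c), h * ((t ^ (b - c))⁻¹ * k * t ^ (b - c)),
          H.mul_mem hh (key _ _ hk), ?_⟩
        have hb : t ^ b = t ^ c * t ^ (b - c) := by
          rw [← pow_add]; congr 1; omega
        rw [hb, pow_add]; group
    | inv x _ hx =>
      obtain ⟨a, b, h, hh, rfl⟩ := hx
      exact ⟨b, a, h⁻¹, H.inv_mem hh, by group⟩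
  refine ⟨normal, ?_⟩
  -- basic χ facts
  have χ1 : χ 1 = 0 := by have := hhom 1 1; simp at this; omega
  have χinv : ∀ g : G, χ g⁻¹ = -χ g := by
    intro g
    have := hhom g g⁻¹
    simp [χ1] at this
    omega
  have χpow : ∀ n : ℕ, χ (t ^ n) = n := by
    intro n
    induction n with
    | zero => simpa using χ1
    | succ n ih => rw [pow_succ, hhom, ih, ht]; push_cast; ring
  intro g
  constructor
  · intro hg0
    obtain ⟨a, b, h, hh, rfl⟩ := normal g
    have : (a : ℤ) + 0 + -(b : ℤ) = 0 := by
      rw [hhom, hhom, χpow, χinv, χpow, hH h hh] at hg0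
      omega
    have hab : a = b := by omega
    subst hab
    exact ⟨a, Subgroup.mem_map.2 ⟨h, hh, by simp [MulAut.conj, mul_assoc]⟩⟩
  · rintro ⟨n, hn⟩
    obtain ⟨h, hh, rfl⟩ := Subgroup.mem_map.1 hn
    have : (MulAut.conj (t ^ n)).toMonoidHom h = t ^ n * h * (t ^ n)⁻¹ := by
      simp [MulAut.conj, mul_assoc]
    rw [this, hhom, hhom, χpow, χinv, χpow, hH h hh]
    ring
end
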